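/- Fix reals z1, z2 with z2 < 0 < z1, nonnegative reals g11, g22, g12 with z1·g22 − z2·g12 > 0, and c1⁰, c2⁰ > 0. Set m = (z1/z2)·(1/c2⁰ + g22) − g12 and M = (z1·g22 − z2·g12)/(z2·(1 + g11·c1⁰) − z1·g12·c1⁰). Then for all c1, c2 with 0 < c1 ≤ c1⁰ and c2 ≥ c2⁰ one has m·c1 ≤ F(c1, c2) ≤ M·c1 < 0. -/

import Mathlib

/-- The right-hand side of the trajectory ODE `dc1/dc2 = F(c1, c2)` for stationary
solutions of the PNP-steric system. -/
noncomputable def F (z1 z2 g11 g22 g12 c1 c2 : ℝ) : ℝ :=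
  (z1 * (1 / c2 + g22) - z2 * g12) / (z2 * (1 / c1 + g11) - z1 * g12)

/-- The bound (bound_dc1_dc2) used in the proof of Lemma 2 of the paper. -/
theorem stmt1 (z1 z2 g11 g22 g12 c10 c20 : ℝ)
    (hz2 : z2 < 0) (hz1 : 0 < z1)
    (hg11 : 0 ≤ g11) (hg22 : 0 ≤ g22) (hg12 : 0 ≤ g12)
    (hpos : 0 < z1 * g22 - z2 * g12)
    (hc10 : 0 < c10) (hc20 : 0 < c20)
    (m M : ℝ)
    (hm : m = z1 / z2 * (1 / c20 + g22) - g12)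
    (hM : M = (z1 * g22 - z2 * g12) / (z2 * (1 + g11 * c10) - z1 * g12 * c10)) :
    ∀ c1 c2 : ℝ, 0 < c1 → c1 ≤ c10 → c20 ≤ c2 →
      m * c1 ≤ F z1 z2 g11 g22 g12 c1 c2 ∧
      F z1 z2 g11 g22 g12 c1 c2 ≤ M * c1 ∧ M * c1 < 0 := by
  intro c1 c2 hc1 hle1 hle2
  have hz2' : z2 ≠ 0 := ne_of_lt hz2
  have hc2 : 0 < c2 := lt_of_lt_of_le hc20 hle2
  have hK : z2 * g11 - z1 * g12 ≤ 0 := by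
    nlinarith [mul_nonneg (neg_nonneg.mpr hz2.le) hg11, mul_nonneg hz1.le hg12]
  have hD : z2 * (1 / c1 + g11) - z1 * g12 < 0 := by
    nlinarith [mul_pos (one_div_pos.mpr hc1) (neg_pos.mpr hz2),
      mul_nonneg hz1.le hg12, mul_nonneg (neg_nonneg.mpr hz2.le) hg11]
  have hN : 0 < z1 * (1 / c2 + g22) - z2 * g12 := by
    nlinarith [mul_pos hz1 (one_div_pos.mpr hc2), mul_nonneg hz1.le hg22,
      mul_nonneg (neg_nonneg.mpr hz2.le) hg12]
  have hN0 : z1 * g22 - z2 * g12 ≤ z1 * (1 / c2 + g22) - z2 * g12 := by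
    nlinarith [mul_pos hz1 (one_div_pos.mpr hc2)]
  -- denominator at c10, times c10
  have hD0c : z2 * (1 + g11 * c10) - z1 * g12 * c10 < 0 := by
    nlinarith [mul_nonpos_of_nonneg_of_nonpos hc10.le hK]
  have hM_neg : M < 0 := by
    rw [hM]; exact div_neg_of_pos_of_neg hpos hD0c
  have hMD0 : M * (z2 * (1 + g11 * c10) - z1 * g12 * c10) = z1 * g22 - z2 * g12 := by
    rw [hM, div_mul_cancel₀ _ hD0c.ne]
  have hc1D : c1 * (z2 * (1 / c1 + g11) - z1 * g12)
      = z2 + c1 * (z2 * g11 - z1 * g12) := by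
    field_simp; ring
  -- m is negative
  have hmz2 : m * z2 = z1 * (1 / c20 + g22) - z2 * g12 := by
    rw [hm]; field_simp
  have hmz2pos : 0 < m * z2 := by
    rw [hmz2]
    nlinarith [mul_pos hz1 (one_div_pos.mpr hc20), mul_nonneg hz1.le hg22,
      mul_nonneg (neg_nonneg.mpr hz2.le) hg12]
  have hm_neg : m < 0 := by nlinarith
  refine ⟨?_, ?_, mul_neg_of_neg_of_pos hM_neg hc1⟩
  · -- lower bound
    rw [F, le_div_iff_of_neg hD]
    have hrw : m * c1 * (z2 * (1 / c1 + g11) - z1 * g12)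
        = m * z2 + m * (c1 * (z2 * g11 - z1 * g12)) := by
      have : m * c1 * (z2 * (1 / c1 + g11) - z1 * g12)
          = m * (c1 * (z2 * (1 / c1 + g11) - z1 * g12)) := by ring
      rw [this, hc1D]; ring
    rw [hrw, hmz2]
    have hv : z1 * (1 / c2) ≤ z1 * (1 / c20) :=
      mul_le_mul_of_nonneg_left (one_div_le_one_div_of_le hc20 hle2) hz1.le
    have hmk : 0 ≤ m * (c1 * (z2 * g11 - z1 * g12)) := by
      have h := mul_nonneg (neg_nonneg.mpr hm_neg.le)
        (neg_nonneg.mpr (mul_nonpos_of_nonneg_of_nonpos hc1.le hK))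
      have h2 : -m * -(c1 * (z2 * g11 - z1 * g12))
          = m * (c1 * (z2 * g11 - z1 * g12)) := by ring
      linarith [h, h2.ge, h2.le]
    have hv' : z1 * (1 / c2 + g22) ≤ z1 * (1 / c20 + g22) :=
      mul_le_mul_of_nonneg_left
        (add_le_add_left (one_div_le_one_div_of_le hc20 hle2) g22) hz1.le
    linarith
  · -- upper bound
    rw [F, div_le_iff_of_neg hD]
    have hrw : M * c1 * (z2 * (1 / c1 + g11) - z1 * g12)
        = M * (z2 + c1 * (z2 * g11 - z1 * g12)) := by
      have : M * c1 * (z2 * (1 / c1 + g11) - z1 * g12)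
          = M * (c1 * (z2 * (1 / c1 + g11) - z1 * g12)) := by ring
      rw [this, hc1D]
    rw [hrw]
    have hge : z2 + c10 * (z2 * g11 - z1 * g12) ≤ z2 + c1 * (z2 * g11 - z1 * g12) := by
      linarith [mul_le_mul_of_nonpos_right hle1 hK]
    have h1 : M * (z2 + c1 * (z2 * g11 - z1 * g12))
        ≤ M * (z2 + c10 * (z2 * g11 - z1 * g12)) :=
      mul_le_mul_of_nonpos_left hge hM_neg.le
    have h2 : M * (z2 + c10 * (z2 * g11 - z1 * g12)) = z1 * g22 - z2 * g12 := by
      rw [← hMD0]; ring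
    linarith
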